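/- arXiv:1803.00168 — 5 statements merged into one kernel-verified Lean document; each statement's English description precedes it below -/
import Mathlib

section
/- For real numbers α > 2 and s > 0, the Lebesgue integral over the plane satisfies ∫_{ℝ²} (1 − 1/(1 + s‖x‖^{−α})) dx = 2π · (s^{2/α}/α) · B(2/α, (α−2)/α), where ‖·‖ denotes the Euclidean norm on ℝ² and B is the Beta function. (This is the exponent appearing in the Laplace transform of the aggregate inter-cell interference in Lemma 2 of the paper.) -/
open MeasureTheory Real Set

lemma aux1 (a : ℝ) (h0 : 0 < a) (h1 : a < 1) :
    ∫ v in Ioo (0:ℝ) 1, v ^ (a - 1) * (1 - v) ^ (-a) = Real.Gamma a * Real.Gamma (1 - a) := by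
  have key := Complex.Gamma_mul_Gamma_eq_betaIntegral (s := (a : ℂ)) (t := ((1 - a : ℝ) : ℂ))
    (by simpa using h0) (by simpa using sub_pos.mpr h1)
  have hsum : (a : ℂ) + ((1 - a : ℝ) : ℂ) = 1 := by push_cast; ring
  rw [hsum, Complex.Gamma_one, one_mul] at key
  have hbeta : Complex.betaIntegral (a : ℂ) ((1 - a : ℝ) : ℂ)
      = ((∫ v in Ioo (0:ℝ) 1, v ^ (a - 1) * (1 - v) ^ (-a) : ℝ) : ℂ) := by
    rw [Complex.betaIntegral, intervalIntegral.integral_of_le zero_le_one,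
      MeasureTheory.integral_Ioc_eq_integral_Ioo]
    have : ∫ (t : ℝ) in Ioo (0:ℝ) 1, ((t:ℂ) ^ ((a:ℂ) - 1) * ((1:ℂ) - ↑t) ^ (((1 - a : ℝ):ℂ) - 1))
        = ∫ t in Ioo (0:ℝ) 1, ((t ^ (a - 1) * (1 - t) ^ (-a) : ℝ) : ℂ) := by
      refine setIntegral_congr_fun measurableSet_Ioo fun x hx => ?_
      obtain ⟨hx0, hx1⟩ := hx
      have hx1' : (0:ℝ) ≤ 1 - x := by linarith
      rw [Complex.ofReal_mul, Complex.ofReal_cpow hx0.le, Complex.ofReal_cpow hx1']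
      push_cast
      ring_nf
    rw [this]; exact integral_ofReal
  rw [hbeta, Complex.Gamma_ofReal, Complex.Gamma_ofReal] at key
  exact_mod_cast key.symm

lemma aux2 (a : ℝ) (h0 : 0 < a) (h1 : a < 1) :
    ∫ u in Ioi (0:ℝ), u ^ (a - 1) / (1 + u)
      = ∫ v in Ioo (0:ℝ) 1, v ^ (a - 1) * (1 - v) ^ (-a) := by
  have himg : (fun v : ℝ => v / (1 - v)) '' Ioo 0 1 = Ioi 0 := by
    ext u
    constructor
    · rintro ⟨v, ⟨hv0, hv1⟩, rfl⟩
      exact div_pos hv0 (by linarith)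
    · intro hu
      refine ⟨u / (1 + u), ⟨div_pos hu (by linarith [mem_Ioi.mp hu]), ?_⟩, ?_⟩
      · rw [div_lt_one (by linarith [mem_Ioi.mp hu])]; linarith [mem_Ioi.mp hu]
      · have h1u : (0:ℝ) < 1 + u := by linarith [mem_Ioi.mp hu]
        field_simp
        ring
  have hderiv : ∀ v ∈ Ioo (0:ℝ) 1, HasDerivWithinAt (fun v : ℝ => v / (1 - v))
      (((1 - v) ^ 2)⁻¹) (Ioo 0 1) v := by
    intro v hv
    have hne : (1:ℝ) - v ≠ 0 := ne_of_gt (by linarith [hv.2])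
    have := (hasDerivAt_id v).div ((hasDerivAt_const v (1:ℝ)).sub (hasDerivAt_id v)) hne
    refine this.hasDerivWithinAt.congr_deriv ?_
    simp only [Pi.sub_apply, id]
    ring
  have hinj : InjOn (fun v : ℝ => v / (1 - v)) (Ioo 0 1) := by
    intro x hx y hy hxy
    have hx1 : (0:ℝ) < 1 - x := by linarith [hx.2]
    have hy1 : (0:ℝ) < 1 - y := by linarith [hy.2]
    rw [div_eq_div_iff hx1.ne' hy1.ne'] at hxy
    nlinarith
  have := integral_image_eq_integral_abs_deriv_smul measurableSet_Ioo hderiv hinj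
    (fun u => u ^ (a - 1) / (1 + u))
  rw [himg] at this
  rw [this]
  refine setIntegral_congr_fun measurableSet_Ioo fun v hv => ?_
  obtain ⟨hv0, hv1⟩ := hv
  have h1v : (0:ℝ) < 1 - v := by linarith
  have h2 : (1:ℝ) + v / (1 - v) = 1 / (1 - v) := by field_simp; ring
  have h3 : (v / (1 - v)) ^ (a - 1) = v ^ (a - 1) / (1 - v) ^ (a - 1) :=
    Real.div_rpow hv0.le h1v.le _
  have h4 : |((1 - v) ^ 2)⁻¹| = ((1 - v) ^ 2)⁻¹ := abs_of_pos (by positivity)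
  rw [smul_eq_mul, h4, h2, h3]
  rw [show ((1 - v) ^ 2 : ℝ) = (1 - v) ^ (2:ℝ) by rw [Real.rpow_two]]
  rw [← Real.rpow_neg h1v.le, div_div_eq_mul_div, div_one, div_eq_mul_inv, ← Real.rpow_neg h1v.le]
  have h5 : (1 - v) ^ (-a) = (1 - v) ^ (-2:ℝ) * ((1 - v) ^ (-(a - 1)) * (1 - v)) := by
    nth_rewrite 4 [← Real.rpow_one (1 - v)]
    rw [← Real.rpow_add h1v, ← Real.rpow_add h1v]
    congr 1; ring
  rw [h5]; ring

lemma aux3 (α s : ℝ) (hα : 2 < α) (hs : 0 < s) :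
    ∫ y in Ioi (0:ℝ), y * (s / (y ^ α + s))
      = s ^ (2 / α) * ((1 / α) * ∫ u in Ioi (0:ℝ), u ^ (2 / α - 1) / (1 + u)) := by
  have hα0 : (0:ℝ) < α := by linarith
  set c : ℝ := s ^ (1 / α) with hc
  have hc0 : 0 < c := rpow_pos_of_pos hs _
  have hcα : c ^ α = s := by
    rw [hc, ← Real.rpow_mul hs.le, one_div_mul_cancel hα0.ne', Real.rpow_one]
  -- Step 1: scaling y = c * x
  have heq : ∫ x in Ioi (0:ℝ), (fun y => y * (s / (y ^ α + s))) (c * x)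
      = c • ∫ x in Ioi (0:ℝ), x / (1 + x ^ α) := by
    rw [← integral_smul]
    refine setIntegral_congr_fun measurableSet_Ioi fun x hx => ?_
    have hx0 : (0:ℝ) < x := hx
    have hcxα : (c * x) ^ α = s * x ^ α := by rw [mul_rpow hc0.le hx0.le, hcα]
    simp only [smul_eq_mul]
    rw [hcxα]
    have hd : s * x ^ α + s = s * (1 + x ^ α) := by ring
    have hxα : (0:ℝ) < 1 + x ^ α := by positivity
    rw [hd]
    field_simp
  have h := integral_comp_mul_left_Ioi (fun y => y * (s / (y ^ α + s))) 0 hc0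
  rw [mul_zero, heq] at h
  have step1 : ∫ y in Ioi (0:ℝ), y * (s / (y ^ α + s))
      = (c * c) * ∫ x in Ioi (0:ℝ), x / (1 + x ^ α) := by
    have h' := congrArg (fun t => c • t) h
    simp only [smul_smul, mul_inv_cancel₀ hc0.ne', one_smul] at h'
    rw [← h', smul_eq_mul]
  -- Step 2: substitution u = x ^ α
  have h2 := integral_comp_rpow_Ioi_of_pos (g := fun u => u ^ (2 / α - 1) / (1 + u)) hα0
  have heq2 : ∫ x in Ioi (0:ℝ), (α * x ^ (α - 1)) • ((x ^ α) ^ (2 / α - 1) / (1 + x ^ α))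
      = α • ∫ x in Ioi (0:ℝ), x / (1 + x ^ α) := by
    rw [← integral_smul]
    refine setIntegral_congr_fun measurableSet_Ioi fun x hx => ?_
    have hx0 : (0:ℝ) < x := hx
    have e1 : (x ^ α) ^ (2 / α - 1) = x ^ (α * (2 / α - 1)) := (Real.rpow_mul hx0.le _ _).symm
    have e2 : α * (2 / α - 1) = 2 - α := by field_simp
    simp only [smul_eq_mul]
    rw [e1, e2]
    have e3 : x ^ (α - 1) * x ^ (2 - α) = x := by
      rw [← Real.rpow_add hx0]; norm_num
    calc α * x ^ (α - 1) * (x ^ (2 - α) / (1 + x ^ α))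
        = α * (x ^ (α - 1) * x ^ (2 - α) / (1 + x ^ α)) := by ring
      _ = α * (x / (1 + x ^ α)) := by rw [e3]
  rw [heq2] at h2
  have step2 : ∫ x in Ioi (0:ℝ), x / (1 + x ^ α)
      = (1 / α) * ∫ u in Ioi (0:ℝ), u ^ (2 / α - 1) / (1 + u) := by
    rw [← h2, smul_eq_mul, ← mul_assoc, one_div, inv_mul_cancel₀ hα0.ne', one_mul]
  have hcc : c * c = s ^ (2 / α) := by
    rw [hc, ← Real.rpow_add hs]
    congr 1
    ring
  rw [step1, step2, hcc]

/-- The real Beta function, `B(x, y) = Γ(x) Γ(y) / Γ(x + y)`. -/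
noncomputable def realBeta (x y : ℝ) : ℝ := Real.Gamma x * Real.Gamma y / Real.Gamma (x + y)

/-- For `α > 2` and `s > 0`,
`∫_{ℝ²} (1 − 1/(1 + s‖x‖^{−α})) dx = 2π (s^{2/α}/α) B(2/α, (α−2)/α)`. -/
theorem stmt_0 (α s : ℝ) (hα : 2 < α) (hs : 0 < s) :
    ∫ x : EuclideanSpace ℝ (Fin 2), (1 - 1 / (1 + s * ‖x‖ ^ (-α))) =
      2 * π * (s ^ (2 / α) / α) * realBeta (2 / α) ((α - 2) / α) := by
  have hα0 : (0:ℝ) < α := by linarith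
  rw [MeasureTheory.integral_fun_norm_addHaar (volume : Measure (EuclideanSpace ℝ (Fin 2)))
    (fun r => 1 - 1 / (1 + s * r ^ (-α)))]
  rw [finrank_euclideanSpace_fin]
  have hball : ((volume : Measure (EuclideanSpace ℝ (Fin 2))) (Metric.ball 0 1)).toReal = π := by
    rw [EuclideanSpace.volume_ball]
    simp only [Fintype.card_fin]
    norm_num [Real.sq_sqrt Real.pi_pos.le, Real.Gamma_two,
      ENNReal.toReal_ofReal Real.pi_pos.le]
  rw [measureReal_def, hball]
  have hIoi : ∫ y in Set.Ioi (0:ℝ), y ^ (2 - 1) • (1 - 1 / (1 + s * y ^ (-α)))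
      = ∫ y in Set.Ioi (0:ℝ), y * (s / (y ^ α + s)) := by
    refine setIntegral_congr_fun measurableSet_Ioi fun y hy => ?_
    have hy0 : (0:ℝ) < y := hy
    have hyα : (0:ℝ) < y ^ α := rpow_pos_of_pos hy0 α
    rw [Real.rpow_neg hy0.le]
    have hden : (0:ℝ) < 1 + s * (y ^ α)⁻¹ := by positivity
    simp only [show (2 - 1 : ℕ) = 1 from rfl, pow_one, smul_eq_mul]
    have he : 1 - 1 / (1 + s * (y ^ α)⁻¹) = s / (y ^ α + s) := by
      rw [eq_div_iff (by positivity)]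
      field_simp
      ring
    rw [he]
  rw [hIoi, aux3 α s hα hs]
  have ha0 : 0 < 2 / α := by positivity
  have ha1 : 2 / α < 1 := (div_lt_one hα0).mpr hα
  rw [aux2 _ ha0 ha1, aux1 _ ha0 ha1]
  have h1 : (1:ℝ) - 2 / α = (α - 2) / α := by field_simp
  have hrb : realBeta (2 / α) ((α - 2) / α)
      = Real.Gamma (2 / α) * Real.Gamma (1 - 2 / α) := by
    rw [realBeta, show 2 / α + (α - 2) / α = 1 by field_simp; ring, Real.Gamma_one, div_one, h1]
  rw [hrb]
  simp only [smul_eq_mul, nsmul_eq_mul]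
  push_cast
  ring
end

section
/- Let R_c > 0 and α > 0. Let Y be a random point uniformly distributed on the closed disk of radius R_c centered at the origin in ℝ², and let X be an exponential random variable with rate 1, independent of Y. Then the law of the composite channel gain X/‖Y‖^α is absolutely continuous with respect to Lebesgue measure on (0,∞), with density f(z) = (2/R_c²) ∫_0^{R_c} r^{α+1} e^{−r^α z} dr for z > 0. -/
open MeasureTheory ProbabilityTheory Real Set

lemma cont_rpow {c : ℝ} (hc : 0 < c) : Continuous fun r : ℝ => r ^ c := by
  rw [continuous_iff_continuousAt]
  intro x
  exact Real.continuousAt_rpow_const x c (Or.inr hc.le)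

lemma exp_int (b c : ℝ) (hb : 0 < b) :
    ∫ z in Ioi c, Real.exp (-(b * z)) = Real.exp (-(b * c)) / b := by
  have h := integral_comp_mul_left_Ioi (fun x => Real.exp (-x)) c hb
  simp only [smul_eq_mul] at h
  rw [h, integral_exp_neg_Ioi]
  ring

lemma vol_cb (Rc : ℝ) (hRc : 0 ≤ Rc) :
    volume (Metric.closedBall (0 : EuclideanSpace ℝ (Fin 2)) Rc)
      = ENNReal.ofReal (π * Rc ^ 2) := by
  rw [EuclideanSpace.volume_closedBall]
  simp only [Fintype.card_fin]
  norm_num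
  rw [← ENNReal.ofReal_pow hRc, ← ENNReal.ofReal_pow (Real.sqrt_nonneg _), Real.sq_sqrt pi_nonneg,
    ← ENNReal.ofReal_mul (by positivity), mul_comm (Rc ^ 2)]

lemma vol_b1 : (volume (Metric.ball (0 : EuclideanSpace ℝ (Fin 2)) 1)).toReal = π := by
  rw [EuclideanSpace.volume_ball]
  simp only [Fintype.card_fin]
  norm_num
  rw [Real.sq_sqrt pi_nonneg]

lemma radial (Rc α t : ℝ) :
    ∫ y in Metric.closedBall (0 : EuclideanSpace ℝ (Fin 2)) Rc, Real.exp (-(t * ‖y‖ ^ α))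
      = 2 * π * ∫ r in Ioc (0:ℝ) Rc, r * Real.exp (-(t * r ^ α)) := by
  set f : ℝ → ℝ := Set.indicator (Iic Rc) (fun r => Real.exp (-(t * r ^ α))) with hf
  have h1 : ∀ x : EuclideanSpace ℝ (Fin 2),
      Set.indicator (Metric.closedBall 0 Rc) (fun y => Real.exp (-(t * ‖y‖ ^ α))) x = f ‖x‖ := by
    intro x
    by_cases hx : ‖x‖ ≤ Rc
    · rw [Set.indicator_of_mem (by simpa [Metric.mem_closedBall, dist_zero_right] using hx),
        hf, Set.indicator_of_mem (by simpa using hx)]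
    · rw [Set.indicator_of_notMem (by simpa [Metric.mem_closedBall, dist_zero_right] using hx),
        hf, Set.indicator_of_notMem (by simpa using hx)]
  have key : ∫ y in Ioi (0:ℝ), y ^ (2 - 1) • f y
      = ∫ r in Ioc (0:ℝ) Rc, r * Real.exp (-(t * r ^ α)) := by
    have h2 : ∀ y : ℝ, y ^ (2 - 1) • f y
        = Set.indicator (Iic Rc) (fun r => r * Real.exp (-(t * r ^ α))) y := by
      intro y
      by_cases hy : y ∈ Iic Rc
      · simp [hf, Set.indicator_of_mem hy, smul_eq_mul]
      · simp [hf, Set.indicator_of_notMem hy]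
    rw [integral_congr_ae (Filter.Eventually.of_forall fun y => h2 y),
      integral_indicator measurableSet_Iic, Measure.restrict_restrict measurableSet_Iic]
    congr 1
    rw [Set.Iic_inter_Ioi]
  rw [← integral_indicator (measurableSet_closedBall),
    integral_congr_ae (Filter.Eventually.of_forall h1),
    integral_fun_norm_addHaar volume f, finrank_euclideanSpace, Fintype.card_fin, measureReal_def, vol_b1, key]
  simp [smul_eq_mul]
  ring

lemma inner_exp (α t : ℝ) (hα : 0 < α) {r : ℝ} (hr : 0 < r) :
    ∫⁻ z in Ioi t, ENNReal.ofReal (r ^ (α+1) * Real.exp (-(r ^ α * z)))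
      = ENNReal.ofReal (r * Real.exp (-(r ^ α * t))) := by
  have hb : 0 < r ^ α := Real.rpow_pos_of_pos hr α
  have hC : 0 ≤ r ^ (α+1) := (Real.rpow_pos_of_pos hr _).le
  simp_rw [ENNReal.ofReal_mul hC]
  rw [lintegral_const_mul' _ _ ENNReal.ofReal_ne_top]
  have hint : IntegrableOn (fun z => Real.exp (-(r ^ α * z))) (Ioi t) := by
    simpa [neg_mul] using exp_neg_integrableOn_Ioi t hb
  rw [← ofReal_integral_eq_lintegral_ofReal hint
    (Filter.Eventually.of_forall fun z => (Real.exp_pos _).le),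
    exp_int _ _ hb, ← ENNReal.ofReal_mul hC]
  congr 1
  rw [Real.rpow_add hr, Real.rpow_one]
  field_simp

lemma rhs_calc (Rc α : ℝ) (hRc : 0 < Rc) (hα : 0 < α) (t : ℝ) :
    ∫⁻ z in Ioi t, ENNReal.ofReal ((2 / Rc ^ 2) *
        ∫ r in (0:ℝ)..Rc, r ^ (α+1) * Real.exp (-(r ^ α * z)))
      = ENNReal.ofReal ((2 / Rc ^ 2) * ∫ r in Ioc (0:ℝ) Rc, r * Real.exp (-(r ^ α * t))) := by
  have hc : Continuous fun p : ℝ × ℝ => p.2 ^ (α+1) * Real.exp (-(p.2 ^ α * p.1)) := by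
    exact ((cont_rpow (by linarith)).comp continuous_snd).mul
      (((((cont_rpow hα).comp continuous_snd).mul continuous_fst).neg).rexp)
  have hcz : ∀ z : ℝ, Continuous fun r : ℝ => r ^ (α+1) * Real.exp (-(r ^ α * z)) := fun z =>
    hc.comp (continuous_const.prodMk continuous_id)
  have hint : ∀ z : ℝ, IntegrableOn (fun r => r ^ (α+1) * Real.exp (-(r ^ α * z)))
      (Ioc (0:ℝ) Rc) := fun z => (hcz z).integrableOn_Ioc
  have hnn : ∀ z : ℝ, (fun _ : ℝ => (0:ℝ)) ≤ᵐ[volume.restrict (Ioc (0:ℝ) Rc)]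
      fun r => r ^ (α+1) * Real.exp (-(r ^ α * z)) := by
    intro z
    filter_upwards [ae_restrict_mem measurableSet_Ioc] with r hr
    exact mul_nonneg (Real.rpow_pos_of_pos hr.1 _).le (Real.exp_pos _).le
  have step1 : ∀ z : ℝ, ENNReal.ofReal ((2 / Rc ^ 2) *
        ∫ r in (0:ℝ)..Rc, r ^ (α+1) * Real.exp (-(r ^ α * z)))
      = ENNReal.ofReal (2 / Rc ^ 2) *
        ∫⁻ r in Ioc (0:ℝ) Rc, ENNReal.ofReal (r ^ (α+1) * Real.exp (-(r ^ α * z))) := by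
    intro z
    rw [intervalIntegral.integral_of_le hRc.le,
      ENNReal.ofReal_mul (by positivity),
      ofReal_integral_eq_lintegral_ofReal (hint z) (hnn z)]
  simp_rw [step1]
  rw [lintegral_const_mul' _ _ ENNReal.ofReal_ne_top]
  have hmeas : AEMeasurable (fun p : ℝ × ℝ =>
      ENNReal.ofReal (p.2 ^ (α+1) * Real.exp (-(p.2 ^ α * p.1))))
      ((volume.restrict (Ioi t)).prod (volume.restrict (Ioc (0:ℝ) Rc))) :=
    (hc.measurable.ennreal_ofReal).aemeasurable
  rw [lintegral_lintegral_swap hmeas]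
  have step2 : ∫⁻ r in Ioc (0:ℝ) Rc,
      (∫⁻ z in Ioi t, ENNReal.ofReal (r ^ (α+1) * Real.exp (-(r ^ α * z))))
      = ∫⁻ r in Ioc (0:ℝ) Rc, ENNReal.ofReal (r * Real.exp (-(r ^ α * t))) := by
    refine setLIntegral_congr_fun measurableSet_Ioc ?_
    intro r hr
    exact inner_exp α t hα hr.1
  rw [step2, ← ofReal_integral_eq_lintegral_ofReal, ← ENNReal.ofReal_mul (by positivity)]
  · exact ((continuous_id.mul ((((cont_rpow hα).mul continuous_const).neg).rexp)).integrableOn_Ioc)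
  · filter_upwards [ae_restrict_mem measurableSet_Ioc] with r hr
    exact mul_nonneg hr.1.le (Real.exp_pos _).le

/-- Let `Y` be uniform on the closed disk of radius `R_c` in ℝ², `X ~ Exp(1)` independent
of `Y`. Then the law of the composite channel gain `X/‖Y‖^α` is absolutely continuous with
respect to Lebesgue measure on `(0,∞)`, with density
`f(z) = (2/R_c²) ∫_0^{R_c} r^{α+1} e^{−r^α z} dr`. -/
theorem stmt_2 {Ω : Type*} [MeasureSpace Ω] [IsProbabilityMeasure (ℙ : Measure Ω)]
    (Rc α : ℝ) (hRc : 0 < Rc) (hα : 0 < α)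
    (X : Ω → ℝ) (Y : Ω → EuclideanSpace ℝ (Fin 2))
    (hXm : Measurable X) (hYm : Measurable Y)
    (hY : Measure.map Y ℙ =
      (volume (Metric.closedBall (0 : EuclideanSpace ℝ (Fin 2)) Rc))⁻¹ •
        volume.restrict (Metric.closedBall 0 Rc))
    (hX : ∀ t : ℝ, 0 ≤ t → ℙ {ω | t ≤ X ω} = ENNReal.ofReal (Real.exp (-t)))
    (hindep : IndepFun X Y ℙ) :
    Measure.map (fun ω => X ω / ‖Y ω‖ ^ α) ℙ =
      (volume.restrict (Set.Ioi (0 : ℝ))).withDensity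
        (fun z => ENNReal.ofReal ((2 / Rc ^ 2) *
          ∫ r in (0 : ℝ)..Rc, r ^ (α + 1) * Real.exp (-(r ^ α * z)))) := by
  classical
  set μX := Measure.map X ℙ with hμXdef
  set μY := Measure.map Y ℙ with hμYdef
  haveI : IsProbabilityMeasure μX := Measure.isProbabilityMeasure_map hXm.aemeasurable
  haveI : IsProbabilityMeasure μY := Measure.isProbabilityMeasure_map hYm.aemeasurable
  have hnormα : Measurable fun y : EuclideanSpace ℝ (Fin 2) => ‖y‖ ^ α :=
    (cont_rpow hα).measurable.comp measurable_norm
  have hgainm : Measurable fun ω => X ω / ‖Y ω‖ ^ α :=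
    hXm.div (hnormα.comp hYm)
  haveI : IsProbabilityMeasure (Measure.map (fun ω => X ω / ‖Y ω‖ ^ α) ℙ) :=
    Measure.isProbabilityMeasure_map hgainm.aemeasurable
  -- law of X on Ici
  have hμX : ∀ s : ℝ, 0 ≤ s → μX (Ici s) = ENNReal.ofReal (Real.exp (-s)) := by
    intro s hs
    rw [hμXdef, Measure.map_apply hXm measurableSet_Ici]
    exact hX s hs
  -- joint law
  have hpair : Measure.map (fun ω => (Y ω, X ω)) ℙ = μY.prod μX :=
    (indepFun_iff_map_prod_eq_prod_map_map hYm.aemeasurable hXm.aemeasurable).mp hindep.symm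
  set g : EuclideanSpace ℝ (Fin 2) × ℝ → ℝ := fun p => p.2 / ‖p.1‖ ^ α with hgdef
  have hg : Measurable g := measurable_snd.div (hnormα.comp measurable_fst)
  have hcomp : Measure.map (fun ω => X ω / ‖Y ω‖ ^ α) ℙ = Measure.map g (μY.prod μX) := by
    rw [← hpair, Measure.map_map hg (hYm.prodMk hXm)]
    rfl
  -- a.e. y ≠ 0
  have h0 : μY {(0:EuclideanSpace ℝ (Fin 2))} = 0 := by
    rw [hY]
    simp only [Measure.smul_apply, Measure.restrict_apply (measurableSet_singleton _),
      smul_eq_mul]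
    have : volume ({(0:EuclideanSpace ℝ (Fin 2))} ∩ Metric.closedBall 0 Rc) = 0 :=
      le_antisymm ((measure_mono Set.inter_subset_left).trans_eq (measure_singleton _))
        zero_le
    rw [this, mul_zero]
  have hae : ∀ᵐ y ∂μY, y ≠ (0:EuclideanSpace ℝ (Fin 2)) := by
    rw [Filter.eventually_iff, mem_ae_iff]
    simpa using h0
  -- key LHS computation
  have key : ∀ t : ℝ, 0 ≤ t → Measure.map (fun ω => X ω / ‖Y ω‖ ^ α) ℙ (Ici t)
      = ENNReal.ofReal ((2 / Rc ^ 2) * ∫ r in Ioc (0:ℝ) Rc, r * Real.exp (-(t * r ^ α))) := by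
    intro t ht
    rw [hcomp, Measure.map_apply hg measurableSet_Ici,
      Measure.prod_apply (hg measurableSet_Ici)]
    have hslice : ∀ᵐ y ∂μY, μX (Prod.mk y ⁻¹' (g ⁻¹' Ici t))
        = ENNReal.ofReal (Real.exp (-(t * ‖y‖ ^ α))) := by
      filter_upwards [hae] with y hy
      have hb : 0 < ‖y‖ ^ α := Real.rpow_pos_of_pos (norm_pos_iff.mpr hy) α
      have hset : Prod.mk y ⁻¹' (g ⁻¹' Ici t) = Ici (t * ‖y‖ ^ α) := by
        ext x
        simp only [Set.mem_preimage, Set.mem_Ici, hgdef]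
        exact le_div_iff₀ hb
      rw [hset, hμX _ (mul_nonneg ht hb.le)]
    rw [lintegral_congr_ae hslice, hY, lintegral_smul_measure]
    have hcont : Continuous fun y : EuclideanSpace ℝ (Fin 2) => Real.exp (-(t * ‖y‖ ^ α)) :=
      ((continuous_const.mul ((cont_rpow hα).comp continuous_norm)).neg).rexp
    rw [← ofReal_integral_eq_lintegral_ofReal
        (hcont.continuousOn.integrableOn_compact (isCompact_closedBall _ _))
        (Filter.Eventually.of_forall fun y => (Real.exp_pos _).le),
      radial Rc α t, vol_cb Rc hRc.le,
      ← ENNReal.ofReal_inv_of_pos (by positivity), smul_eq_mul, ← ENNReal.ofReal_mul (by positivity)]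
    congr 1
    field_simp
  -- RHS measure of Ici a
  have rhsI : ∀ a : ℝ,
      ((volume.restrict (Set.Ioi (0 : ℝ))).withDensity
        (fun z => ENNReal.ofReal ((2 / Rc ^ 2) *
          ∫ r in (0 : ℝ)..Rc, r ^ (α + 1) * Real.exp (-(r ^ α * z))))) (Ici a)
      = ENNReal.ofReal ((2 / Rc ^ 2) *
          ∫ r in Ioc (0:ℝ) Rc, r * Real.exp (-(r ^ α * max a 0))) := by
    intro a
    rw [withDensity_apply _ measurableSet_Ici, Measure.restrict_restrict measurableSet_Ici]
    have hsets : (Ici a ∩ Ioi 0 : Set ℝ) =ᵐ[volume] Ioi (max a 0) := by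
      rcases le_or_gt a 0 with h | h
      · have : (Ici a ∩ Ioi 0 : Set ℝ) = Ioi 0 := by
          ext z; simp only [Set.mem_inter_iff, Set.mem_Ici, Set.mem_Ioi]
          exact ⟨fun hz => hz.2, fun hz => ⟨h.trans hz.le, hz⟩⟩
        rw [this, max_eq_right h]
        exact Filter.EventuallyEq.rfl
      · have h1 : (Ici a ∩ Ioi 0 : Set ℝ) = Ici a :=
          Set.inter_eq_left.mpr fun z hz => lt_of_lt_of_le h hz
        rw [h1, max_eq_left h.le]
        exact (Ioi_ae_eq_Ici (μ := volume) (a := a)).symm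
    rw [Measure.restrict_congr_set hsets]
    exact rhs_calc Rc α hRc hα (max a 0)
  -- total mass one fact: G 0 = 1
  have hG0 : (2 / Rc ^ 2) * ∫ r in Ioc (0:ℝ) Rc, r * Real.exp (-(r ^ α * 0)) = 1 := by
    simp only [mul_zero, neg_zero, Real.exp_zero, mul_one]
    rw [← intervalIntegral.integral_of_le hRc.le, integral_id]
    field_simp
    ring
  -- finiteness of RHS
  haveI : IsFiniteMeasure ((volume.restrict (Set.Ioi (0 : ℝ))).withDensity
      (fun z => ENNReal.ofReal ((2 / Rc ^ 2) *
        ∫ r in (0 : ℝ)..Rc, r ^ (α + 1) * Real.exp (-(r ^ α * z))))) := by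
    constructor
    rw [withDensity_apply _ MeasurableSet.univ, Measure.restrict_univ,
      rhs_calc Rc α hRc hα 0]
    exact ENNReal.ofReal_lt_top
  -- conclude by ext on Ici
  refine Measure.ext_of_Ici _ _ (fun a => ?_)
  rcases le_or_gt 0 a with ha | ha
  · have hcomm : ∫ r in Ioc (0:ℝ) Rc, r * Real.exp (-(a * r ^ α))
        = ∫ r in Ioc (0:ℝ) Rc, r * Real.exp (-(r ^ α * a)) :=
      integral_congr_ae (Filter.Eventually.of_forall fun r => show r * Real.exp (-(a * r ^ α)) = r * Real.exp (-(r ^ α * a)) by rw [mul_comm a (r ^ α)])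
    rw [key a ha, hcomm, rhsI a, max_eq_left ha]
  · rw [rhsI a, max_eq_right ha.le]
    have h1 : Measure.map (fun ω => X ω / ‖Y ω‖ ^ α) ℙ (Ici (0:ℝ)) = 1 := by
      rw [key 0 le_rfl]
      have hcomm : ∫ r in Ioc (0:ℝ) Rc, r * Real.exp (-((0:ℝ) * r ^ α))
          = ∫ r in Ioc (0:ℝ) Rc, r * Real.exp (-(r ^ α * 0)) :=
        integral_congr_ae (Filter.Eventually.of_forall fun r => show r * Real.exp (-((0:ℝ) * r ^ α)) = r * Real.exp (-(r ^ α * 0)) by rw [mul_comm (0:ℝ) (r ^ α)])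
      rw [hcomm, hG0, ENNReal.ofReal_one]
    have hle1 : (1:ENNReal) ≤ Measure.map (fun ω => X ω / ‖Y ω‖ ^ α) ℙ (Ici a) := by
      rw [← h1]
      exact measure_mono (Set.Ici_subset_Ici.mpr ha.le)
    have hge : Measure.map (fun ω => X ω / ‖Y ω‖ ^ α) ℙ (Ici a) ≤ 1 := prob_le_one
    rw [le_antisymm hge hle1, hG0, ENNReal.ofReal_one]
end

section
/- For every s > 0 and d ≥ 0, the Lebesgue integral over the complement of the disk of radius d satisfies ∫_{{x ∈ ℝ² : ‖x‖ ≥ d}} (1 − 1/(1 + s‖x‖^{−4})) dx = π√s (π/2 − arctan(d²/√s)). In particular, for d = 0 this equals π²√s/2 = 2π (s^{1/2}/4) B(1/2, 1/2). (This is the exact evaluation, for path-loss exponent α = 4, of the inter-cell interference exponent over the region excluding the disk around the CoMP user, which underlies the nearest-base-station analysis in Proposition 1 of the paper.) -/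
open MeasureTheory Real Set

/-- For `s > 0` and `d ≥ 0`, with path-loss exponent `4`:
`∫_{‖x‖ ≥ d} (1 − 1/(1 + s‖x‖^{−4})) dx = π√s (π/2 − arctan(d²/√s))`; in particular, for
`d = 0` this equals `π²√s/2 = 2π (s^{1/2}/4) B(1/2, 1/2)`. -/
theorem stmt_9 (s d : ℝ) (hs : 0 < s) (hd : 0 ≤ d) :
    (∫ x in {x : EuclideanSpace ℝ (Fin 2) | d ≤ ‖x‖},
        (1 - 1 / (1 + s * ‖x‖ ^ (-(4 : ℝ)))) =
      π * Real.sqrt s * (π / 2 - Real.arctan (d ^ 2 / Real.sqrt s))) ∧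
    π ^ 2 * Real.sqrt s / 2 = 2 * π * (Real.sqrt s / 4) * realBeta (1 / 2) (1 / 2) := by
  set σ := Real.sqrt s with hσdef
  have hσ : 0 < σ := Real.sqrt_pos.mpr hs
  have hσ2 : σ ^ 2 = s := Real.sq_sqrt hs.le
  constructor
  · -- the main integral
    set f : ℝ → ℝ := fun r => 1 - 1 / (1 + s * r ^ (-(4 : ℝ))) with hf
    set g : ℝ → ℝ := (Ici d).indicator f with hg
    have hmeas : MeasurableSet {x : EuclideanSpace ℝ (Fin 2) | d ≤ ‖x‖} :=
      (isClosed_le continuous_const continuous_norm).measurableSet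
    have hA : (∫ x in {x : EuclideanSpace ℝ (Fin 2) | d ≤ ‖x‖}, f ‖x‖) =
        ∫ x : EuclideanSpace ℝ (Fin 2), g ‖x‖ := by
      rw [← integral_indicator hmeas]
      apply integral_congr_ae
      filter_upwards with x
      simp [hg, Set.indicator_apply, Set.mem_setOf_eq]
    have hB := MeasureTheory.integral_fun_norm_addHaar
      (volume : Measure (EuclideanSpace ℝ (Fin 2))) g
    have hdim : Module.finrank ℝ (EuclideanSpace ℝ (Fin 2)) = 2 := by
      simp [finrank_euclideanSpace]
    rw [hdim] at hB
    have hvol : (volume (Metric.ball (0 : EuclideanSpace ℝ (Fin 2)) 1)).toReal = π := by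
      rw [EuclideanSpace.volume_ball]
      simp only [Fintype.card_fin]
      rw [show ((2 : ℕ) / 2 + 1 : ℝ) = 2 by norm_num, Real.Gamma_two]
      rw [show (Real.sqrt π) ^ 2 = π from Real.sq_sqrt Real.pi_pos.le]
      simp [ENNReal.toReal_ofReal Real.pi_pos.le]
    -- compute the radial integral
    have hrad : (∫ y in Ioi (0 : ℝ), y ^ (2 - 1) • g y) =
        σ / 2 * (π / 2 - Real.arctan (d ^ 2 / σ)) := by
      have h1 : (∫ y in Ioi (0 : ℝ), y ^ (2 - 1) • g y) =
          ∫ y in Ioi (0 : ℝ), (Ici d).indicator (fun y => y * f y) y := by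
        apply integral_congr_ae
        filter_upwards with y
        simp only [hg, Set.indicator_apply, pow_one, smul_eq_mul]
        split <;> simp
      rw [h1, setIntegral_indicator measurableSet_Ici]
      have h2 : (Ioi (0 : ℝ) ∩ Ici d : Set ℝ) =ᵐ[volume] Ioi d := by
        have : (Ioi (0 : ℝ) ∩ Ici d : Set ℝ) =ᵐ[volume] (Ioi (0 : ℝ) ∩ Ioi d : Set ℝ) :=
          Filter.EventuallyEq.inter (Filter.EventuallyEq.refl _ _) Ioi_ae_eq_Ici.symm
        rw [Set.Ioi_inter_Ioi, max_eq_right hd] at this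
        exact this
      rw [setIntegral_congr_set h2]
      have h3 : ∀ y ∈ Ioi d, y * f y = s * y / (s + y ^ 4) := by
        intro y hy
        have hy0 : 0 < y := lt_of_le_of_lt hd hy
        have hy4 : (0 : ℝ) < y ^ 4 := by positivity
        have hrw : y ^ (-(4 : ℝ)) = (y ^ (4 : ℕ))⁻¹ := by
          rw [Real.rpow_neg hy0.le, show (4 : ℝ) = ((4 : ℕ) : ℝ) by norm_num,
            Real.rpow_natCast]
        have hne : (1 : ℝ) + s * (y ^ (4 : ℕ))⁻¹ ≠ 0 := by positivity
        simp only [hf, hrw]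
        field_simp
        ring
      rw [setIntegral_congr_fun measurableSet_Ioi h3]
      -- antiderivative
      set F : ℝ → ℝ := fun y => σ / 2 * Real.arctan (y ^ 2 / σ) with hF
      have hFder : ∀ y : ℝ, HasDerivAt F (s * y / (s + y ^ 4)) y := by
        intro y
        have h1 : HasDerivAt (fun y : ℝ => y ^ 2 / σ) (2 * y / σ) y := by
          simpa using (hasDerivAt_pow 2 y).div_const σ
        have h2 := (Real.hasDerivAt_arctan (y ^ 2 / σ)).comp y h1
        have h3 := h2.const_mul (σ / 2)
        refine h3.congr_deriv ?_
        have hden : (0 : ℝ) < σ ^ 2 + y ^ 4 := by positivity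
        rw [← hσ2]
        field_simp
      have htend : Filter.Tendsto F Filter.atTop (nhds (σ / 2 * (π / 2))) := by
        have h1 : Filter.Tendsto (fun y : ℝ => y ^ 2 / σ) Filter.atTop Filter.atTop :=
          (Filter.tendsto_pow_atTop two_ne_zero).atTop_div_const hσ
        have h2 : Filter.Tendsto Real.arctan Filter.atTop (nhds (π / 2)) :=
          Real.tendsto_arctan_atTop.mono_right nhdsWithin_le_nhds
        exact (h2.comp h1).const_mul (σ / 2)
      have hpos : ∀ y ∈ Ioi d, 0 ≤ s * y / (s + y ^ 4) := by
        intro y hy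
        have hy0 : 0 < y := lt_of_le_of_lt hd hy
        positivity
      rw [MeasureTheory.integral_Ioi_of_hasDerivAt_of_nonneg' (fun y _ => hFder y) hpos htend]
      simp only [hF]
      ring
    rw [hA, hB, hrad, nsmul_eq_mul, smul_eq_mul, measureReal_def, hvol]
    ring
  · -- the beta identity
    have hB : realBeta (1 / 2) (1 / 2) = π := by
      rw [realBeta, show (1 / 2 + 1 / 2 : ℝ) = 1 by norm_num, Real.Gamma_one,
        Real.Gamma_one_half_eq, Real.mul_self_sqrt Real.pi_pos.le]
      norm_num
    rw [hB]
    ring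
end

section
/- Let c, ε₀, ε₁, φ, ρ, d > 0 and I ≥ 0. Let X and Z be independent random variables with X exponential of rate 1 and Z exponential of rate c. Then P( X ≥ ε₀ d⁴ (I + 1/ρ)/φ and Z ≥ ε₁(φ X d^{−4} + I + 1/ρ) ) = (d⁴/(d⁴ + cε₁φ)) · exp( −( cε₁ + ε₀(d⁴ + cε₁φ)/φ ) (I + 1/ρ) ). (This is the conditional joint decoding-success probability computed in the proof of Proposition 2 of the paper: X is the CoMP user's fading power, Z models the NOMA user's composite gain, d is the distance from the CoMP user to the nearest base station, I is the inter-cell interference value, ε₀ and ε₁ are the SINR thresholds, φ is the power ratio, and ρ is the transmit SNR.) -/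
open MeasureTheory ProbabilityTheory Real

/-- Survival integral of an exponential density. -/
lemma exp_surv_lintegral {r a : ℝ} (hr : 0 < r) :
    ∫⁻ x in Set.Ici a, ENNReal.ofReal (Real.exp (-(r * x))) =
      ENNReal.ofReal (Real.exp (-(r * a)) / r) := by
  have hae : (Set.Ici a : Set ℝ) =ᵐ[volume] Set.Ioi a := Ioi_ae_eq_Ici.symm
  rw [setLIntegral_congr hae]
  have hint : IntegrableOn (fun x : ℝ => Real.exp (-(r * x))) (Set.Ioi a) := by
    simpa [neg_mul] using exp_neg_integrableOn_Ioi a hr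
  rw [← ofReal_integral_eq_lintegral_ofReal hint
      (Filter.Eventually.of_forall fun x => (Real.exp_pos _).le)]
  congr 1
  have := integral_comp_mul_right_Ioi (fun y : ℝ => Real.exp (-y)) a hr
  simp only [smul_eq_mul] at this
  have h2 : (∫ x in Set.Ioi a, Real.exp (-(x * r))) = r⁻¹ * Real.exp (-(a * r)) := by
    rw [this, integral_exp_neg_Ioi]
  calc (∫ x in Set.Ioi a, Real.exp (-(r * x)))
      = ∫ x in Set.Ioi a, Real.exp (-(x * r)) := by simp [mul_comm]
    _ = r⁻¹ * Real.exp (-(a * r)) := h2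
    _ = Real.exp (-(r * a)) / r := by rw [mul_comm a r]; ring

/-- Joint decoding-success probability in Proposition 2 of the paper: if `X` is exponential
of rate 1 and `Z` exponential of rate `c`, independent, then
`P(X ≥ ε₀d⁴(I + 1/ρ)/φ ∧ Z ≥ ε₁(φXd^{−4} + I + 1/ρ))
  = (d⁴/(d⁴ + cε₁φ)) exp(−(cε₁ + ε₀(d⁴ + cε₁φ)/φ)(I + 1/ρ))`. -/
theorem stmt_10 {Ω : Type*} [MeasureSpace Ω] [IsProbabilityMeasure (ℙ : Measure Ω)]
    (c ε₀ ε₁ φ ρ d I : ℝ) (hc : 0 < c) (hε₀ : 0 < ε₀) (hε₁ : 0 < ε₁) (hφ : 0 < φ)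
    (hρ : 0 < ρ) (hd : 0 < d) (hI : 0 ≤ I)
    (X Z : Ω → ℝ) (hXm : Measurable X) (hZm : Measurable Z)
    (hX : ∀ t : ℝ, 0 ≤ t → ℙ {ω | t ≤ X ω} = ENNReal.ofReal (Real.exp (-t)))
    (hZ : ∀ t : ℝ, 0 ≤ t → ℙ {ω | t ≤ Z ω} = ENNReal.ofReal (Real.exp (-(c * t))))
    (hindep : IndepFun X Z ℙ) :
    ℙ {ω | ε₀ * d ^ 4 * (I + 1 / ρ) / φ ≤ X ω ∧
          ε₁ * (φ * X ω / d ^ 4 + I + 1 / ρ) ≤ Z ω} =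
      ENNReal.ofReal ((d ^ 4 / (d ^ 4 + c * ε₁ * φ)) *
        Real.exp (-(c * ε₁ + ε₀ * (d ^ 4 + c * ε₁ * φ) / φ) * (I + 1 / ρ))) := by
  have hd4 : (0:ℝ) < d ^ 4 := by positivity
  set m : ℝ := I + 1 / ρ with hm_def
  have hm : 0 < m := by positivity
  set a : ℝ := ε₀ * d ^ 4 * m / φ with ha_def
  have ha : 0 ≤ a := by positivity
  set g : ℝ → ℝ := fun x => ε₁ * (φ * x / d ^ 4 + I + 1 / ρ) with hg_def
  have hgm : Measurable g := by
    apply Measurable.const_mul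
    exact ((measurable_id.const_mul φ |>.div_const _).add_const I).add_const (1/ρ)
  have hg_nonneg : ∀ x, 0 ≤ x → 0 ≤ g x := fun x hx => by
    have : 0 ≤ φ * x / d ^ 4 := by positivity
    have : 0 ≤ φ * x / d ^ 4 + I + 1 / ρ := by positivity
    positivity
  -- the event as a preimage of a measurable product set
  set S : Set (ℝ × ℝ) := {p | a ≤ p.1 ∧ g p.1 ≤ p.2} with hS_def
  have hS : MeasurableSet S := by
    apply MeasurableSet.inter
    · exact measurable_fst measurableSet_Ici
    · exact measurableSet_le (hgm.comp measurable_fst) measurable_snd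
  have hmap : (ℙ : Measure Ω).map (fun ω => (X ω, Z ω)) = ((ℙ : Measure Ω).map X).prod ((ℙ : Measure Ω).map Z) :=
    (ProbabilityTheory.indepFun_iff_map_prod_eq_prod_map_map hXm.aemeasurable
      hZm.aemeasurable).mp hindep
  have hmapX : IsProbabilityMeasure ((ℙ : Measure Ω).map X) := Measure.isProbabilityMeasure_map hXm.aemeasurable
  -- identify the law of X with the exponential measure of rate 1
  have hXlaw : (ℙ : Measure Ω).map X = expMeasure 1 := by
    have hprob : IsProbabilityMeasure (expMeasure 1) :=
      isProbabilityMeasure_expMeasure one_pos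
    have hexpIci : ∀ t : ℝ, 0 ≤ t →
        expMeasure 1 (Set.Ici t) = ENNReal.ofReal (Real.exp (-t)) := by
      intro t ht
      rw [expMeasure, gammaMeasure, withDensity_apply _ measurableSet_Ici]
      have : ∀ x ∈ Set.Ici t, gammaPDF 1 1 x = ENNReal.ofReal (Real.exp (-(1 * x))) := by
        intro x hx
        rw [show gammaPDF 1 1 x = exponentialPDF 1 x from rfl,
          exponentialPDF_of_nonneg (le_trans ht hx)]
        norm_num
      rw [setLIntegral_congr_fun measurableSet_Ici this,
        exp_surv_lintegral one_pos]
      norm_num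
    refine MeasureTheory.Measure.ext_of_Ici _ _ (fun t => ?_)
    have hXIci : ∀ s : ℝ, 0 ≤ s → (ℙ : Measure Ω).map X (Set.Ici s) = ENNReal.ofReal (Real.exp (-s)) := by
      intro s hs
      rw [Measure.map_apply hXm measurableSet_Ici]
      exact hX s hs
    rcases le_or_gt 0 t with ht | ht
    · rw [hXIci t ht, hexpIci t ht]
    · have h1 : (ℙ : Measure Ω).map X (Set.Ici t) = 1 := by
        refine le_antisymm prob_le_one ?_
        calc (1 : ENNReal) = (ℙ : Measure Ω).map X (Set.Ici 0) := by rw [hXIci 0 le_rfl]; simp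
          _ ≤ (ℙ : Measure Ω).map X (Set.Ici t) := measure_mono (Set.Ici_subset_Ici.mpr ht.le)
      have h2 : expMeasure 1 (Set.Ici t) = 1 := by
        refine le_antisymm prob_le_one ?_
        calc (1 : ENNReal) = expMeasure 1 (Set.Ici 0) := by rw [hexpIci 0 le_rfl]; simp
          _ ≤ expMeasure 1 (Set.Ici t) := measure_mono (Set.Ici_subset_Ici.mpr ht.le)
      rw [h1, h2]
  -- express the probability as a double integral
  have hev : {ω | ε₀ * d ^ 4 * (I + 1 / ρ) / φ ≤ X ω ∧
        ε₁ * (φ * X ω / d ^ 4 + I + 1 / ρ) ≤ Z ω} = (fun ω => (X ω, Z ω)) ⁻¹' S := rfl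
  rw [hev, ← Measure.map_apply (hXm.prodMk hZm) hS, hmap, Measure.prod_apply hS]
  have hsec : ∀ x : ℝ, (Prod.mk x ⁻¹' S) =
      if a ≤ x then Set.Ici (g x) else ∅ := by
    intro x
    split_ifs with h
    · ext y; simp [hS_def, h]
    · ext y; simp [hS_def, h]
  have hintegrand : ∀ x : ℝ, ((ℙ : Measure Ω).map Z) (Prod.mk x ⁻¹' S) =
      (Set.Ici a).indicator (fun x => ((ℙ : Measure Ω).map Z) (Set.Ici (g x))) x := by
    intro x
    rw [hsec x]
    by_cases h : a ≤ x
    · rw [if_pos h]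
      exact (Set.indicator_of_mem h (fun x => ((ℙ : Measure Ω).map Z) (Set.Ici (g x)))).symm
    · rw [if_neg h, measure_empty]
      exact (Set.indicator_of_notMem h
        (fun x => ((ℙ : Measure Ω).map Z) (Set.Ici (g x)))).symm
  rw [lintegral_congr hintegrand, lintegral_indicator measurableSet_Ici _]
  -- evaluate the inner probability
  have hZlaw : ∀ x ∈ Set.Ici a, ((ℙ : Measure Ω).map Z) (Set.Ici (g x)) =
      ENNReal.ofReal (Real.exp (-(c * g x))) := by
    intro x hx
    rw [Measure.map_apply hZm measurableSet_Ici]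
    exact hZ (g x) (hg_nonneg x (le_trans ha hx))
  rw [setLIntegral_congr_fun measurableSet_Ici hZlaw, hXlaw,
    expMeasure, gammaMeasure]
  have hpdfm : Measurable (gammaPDF 1 1) :=
    ENNReal.measurable_ofReal.comp (measurable_gammaPDFReal 1 1)
  have hmeas : Measurable (fun x => ENNReal.ofReal (Real.exp (-(c * g x)))) :=
    ENNReal.measurable_ofReal.comp ((hgm.const_mul c).neg.exp)
  rw [setLIntegral_withDensity_eq_setLIntegral_mul _ hpdfm hmeas measurableSet_Ici]
  simp only [Pi.mul_apply]
  -- simplify the integrand on [a, ∞)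
  set K : ℝ := 1 + c * ε₁ * φ / d ^ 4 with hK_def
  have hK : 0 < K := by positivity
  have hintg : ∀ x ∈ Set.Ici a, gammaPDF 1 1 x * ENNReal.ofReal (Real.exp (-(c * g x)))
      = ENNReal.ofReal (Real.exp (-(c * ε₁ * m))) * ENNReal.ofReal (Real.exp (-(K * x))) := by
    intro x hx
    have hx0 : (0:ℝ) ≤ x := le_trans ha hx
    rw [show gammaPDF 1 1 x = exponentialPDF 1 x from rfl, exponentialPDF_of_nonneg hx0,
      ← ENNReal.ofReal_mul (by positivity), ← ENNReal.ofReal_mul (by positivity)]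
    congr 1
    rw [one_mul, ← Real.exp_add, ← Real.exp_add]
    congr 1
    rw [hg_def]
    simp only [hK_def, hm_def]
    field_simp
    ring
  rw [setLIntegral_congr_fun measurableSet_Ici hintg,
    lintegral_const_mul _ (show Measurable fun x : ℝ => ENNReal.ofReal (Real.exp (-(K * x)))
      from (measurable_id.const_mul K).neg.exp.ennreal_ofReal),
    exp_surv_lintegral hK, ← ENNReal.ofReal_mul (by positivity)]
  congr 1
  have hKa : K * a = ε₀ * (d ^ 4 + c * ε₁ * φ) / φ * m := by
    simp only [hK_def, ha_def]; field_simp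
  have h1K : 1 / K = d ^ 4 / (d ^ 4 + c * ε₁ * φ) := by
    simp only [hK_def]; field_simp
  have hexp : Real.exp (-(c * ε₁ * m)) * Real.exp (-(K * a)) =
      Real.exp (-(c * ε₁ + ε₀ * (d ^ 4 + c * ε₁ * φ) / φ) * m) := by
    rw [← Real.exp_add, hKa]; congr 1; ring
  calc Real.exp (-(c * ε₁ * m)) * (Real.exp (-(K * a)) / K)
      = (1 / K) * (Real.exp (-(c * ε₁ * m)) * Real.exp (-(K * a))) := by ring
    _ = d ^ 4 / (d ^ 4 + c * ε₁ * φ) *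
        Real.exp (-(c * ε₁ + ε₀ * (d ^ 4 + c * ε₁ * φ) / φ) * m) := by
        rw [h1K, hexp]
end

section
/- Let R_c > 0, α > 0 and s ≥ 0. Let Y be a random point uniformly distributed on the closed disk of radius R_c centered at the origin in ℝ², and let X be an exponential random variable with rate 1, independent of Y. Then the Laplace transform of the composite channel gain satisfies E[exp(−s X/‖Y‖^α)] = (2/R_c²) ∫_0^{R_c} r/(1 + s r^{−α}) dr. -/
open MeasureTheory ProbabilityTheory Real Set

noncomputable def nuExp : Measure ℝ :=
  (volume.restrict (Ioi (0:ℝ))).withDensity fun x => ENNReal.ofReal (Real.exp (-x))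

lemma nuExp_Ici (a : ℝ) : nuExp (Ici a) = ENNReal.ofReal (Real.exp (-(max a 0))) := by
  set m := max a 0 with hm
  have hset : (Ici a ∩ Ioi 0 : Set ℝ) =ᵐ[volume] Ioi m := by
    rw [MeasureTheory.ae_eq_set]
    constructor
    · refine measure_mono_null (fun x hx => ?_) (volume_singleton (a := m))
      rcases hx with ⟨⟨hxa, hx0⟩, hxm⟩
      simp only [mem_Ioi, not_lt] at hxm
      exact le_antisymm hxm (max_le hxa hx0.le)
    · have : (Ioi m \ (Ici a ∩ Ioi 0) : Set ℝ) = ∅ := by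
        ext x; simp only [mem_diff, mem_Ioi, mem_inter_iff, mem_Ici, mem_empty_iff_false,
          iff_false, not_and, not_not]
        intro hx
        exact fun h => absurd (⟨le_of_lt (lt_of_le_of_lt (le_max_left a 0) hx),
          lt_of_le_of_lt (le_max_right a 0) hx⟩ : a ≤ x ∧ 0 < x) (by simpa using h)
      rw [this, measure_empty]
  rw [nuExp, withDensity_apply _ measurableSet_Ici, Measure.restrict_restrict measurableSet_Ici,
    setLIntegral_congr hset]
  have hint : IntegrableOn (fun x => Real.exp (-x)) (Ioi m) := by
    have := exp_neg_integrableOn_Ioi m (one_pos)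
    simpa using this
  rw [← ofReal_integral_eq_lintegral_ofReal hint
    (Filter.Eventually.of_forall fun x => (Real.exp_pos _).le), integral_exp_neg_Ioi]

lemma nuExp_laplace {c : ℝ} (hc : 0 ≤ c) :
    ∫ x, Real.exp (-(c * x)) ∂nuExp = (1 + c)⁻¹ := by
  have hd : (fun x => ENNReal.ofReal (Real.exp (-x)))
      = fun x => ((Real.toNNReal (Real.exp (-x)) : NNReal) : ENNReal) := rfl
  rw [nuExp, hd, integral_withDensity_eq_integral_smul
    (by fun_prop : Measurable fun x : ℝ => Real.toNNReal (Real.exp (-x))) _]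
  have h1 : ∀ x : ℝ, (Real.toNNReal (Real.exp (-x)) : NNReal) • Real.exp (-(c * x))
      = Real.exp (-(1 + c) * x ^ (1:ℝ)) := by
    intro x
    rw [NNReal.smul_def, Real.coe_toNNReal _ (Real.exp_pos _).le, smul_eq_mul, Real.rpow_one,
      ← Real.exp_add]
    ring_nf
  simp_rw [h1]
  rw [integral_exp_neg_mul_rpow one_pos (by linarith : (0:ℝ) < 1 + c)]
  norm_num [Real.rpow_neg_one, Real.Gamma_two]

lemma map_eq_nuExp {Ω : Type*} [MeasureSpace Ω] [IsProbabilityMeasure (ℙ : Measure Ω)]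
    (X : Ω → ℝ) (hXm : Measurable X)
    (hX : ∀ t : ℝ, 0 ≤ t → ℙ {ω | t ≤ X ω} = ENNReal.ofReal (Real.exp (-t))) :
    Measure.map X ℙ = nuExp := by
  have : IsProbabilityMeasure (Measure.map X ℙ) := Measure.isProbabilityMeasure_map hXm.aemeasurable
  refine Measure.ext_of_Ici _ _ (fun a => ?_)
  rw [Measure.map_apply hXm measurableSet_Ici, nuExp_Ici]
  have hpre : X ⁻¹' Ici a = {ω | a ≤ X ω} := rfl
  rcases le_or_gt 0 a with h | h
  · rw [hpre, hX a h, max_eq_left h]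
  · rw [max_eq_right h.le, neg_zero, Real.exp_zero, ENNReal.ofReal_one]
    refine le_antisymm prob_le_one ?_
    calc (1 : ENNReal) = ℙ {ω | 0 ≤ X ω} := by
          rw [hX 0 le_rfl, neg_zero, Real.exp_zero, ENNReal.ofReal_one]
      _ ≤ ℙ (X ⁻¹' Ici a) := measure_mono (fun ω hω => le_trans h.le hω)

lemma radial_integral (Rc : ℝ) (hRc : 0 < Rc) (g : ℝ → ℝ) :
    ∫ y in Metric.closedBall (0 : EuclideanSpace ℝ (Fin 2)) Rc, g ‖y‖ ∂volume
      = 2 * (volume (Metric.ball (0 : EuclideanSpace ℝ (Fin 2)) 1)).toReal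
        * ∫ r in (0:ℝ)..Rc, r * g r := by
  have h1 : ∫ y in Metric.closedBall (0 : EuclideanSpace ℝ (Fin 2)) Rc, g ‖y‖ ∂volume
      = ∫ y : EuclideanSpace ℝ (Fin 2), (Set.indicator (Icc 0 Rc) g) ‖y‖ ∂volume := by
    rw [← integral_indicator measurableSet_closedBall]
    congr 1
    funext y
    by_cases hy : ‖y‖ ≤ Rc
    · rw [Set.indicator_of_mem (Metric.mem_closedBall.2 (by simpa using hy)),
        Set.indicator_of_mem (mem_Icc.2 ⟨norm_nonneg _, hy⟩)]
    · rw [Set.indicator_of_notMem (by simpa [Metric.mem_closedBall] using hy),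
        Set.indicator_of_notMem (fun h => hy (mem_Icc.1 h).2)]
  rw [h1, integral_fun_norm_addHaar volume (Set.indicator (Icc 0 Rc) g)]
  rw [finrank_euclideanSpace_fin]
  have h2 : ∀ r : ℝ, r ^ (2 - 1) • Set.indicator (Icc 0 Rc) g r
      = Set.indicator (Icc 0 Rc) (fun r => r * g r) r := by
    intro r
    by_cases hr : r ∈ Icc (0:ℝ) Rc
    · rw [Set.indicator_of_mem hr, Set.indicator_of_mem hr]; simp
    · rw [Set.indicator_of_notMem hr, Set.indicator_of_notMem hr, smul_zero]
  simp_rw [h2]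
  rw [integral_indicator measurableSet_Icc, Measure.restrict_restrict measurableSet_Icc]
  have h3 : (Icc (0:ℝ) Rc ∩ Ioi 0) = Ioc 0 Rc := by
    ext x; simp only [mem_inter_iff, mem_Icc, mem_Ioi, mem_Ioc]
    constructor
    · rintro ⟨⟨_, h2⟩, h3⟩; exact ⟨h3, h2⟩
    · rintro ⟨h1, h2⟩; exact ⟨⟨h1.le, h2⟩, h1⟩
  rw [h3, ← intervalIntegral.integral_of_le hRc.le]
  simp [smul_eq_mul, Measure.real]; ring


/-- Laplace transform of the composite channel gain: if `Y` is uniform on the closed disk of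
radius `R_c` in ℝ² and `X ~ Exp(1)` is independent of `Y`, then for `s ≥ 0`,
`E[exp(−sX/‖Y‖^α)] = (2/R_c²) ∫_0^{R_c} r/(1 + s r^{−α}) dr`. -/
theorem stmt_12 {Ω : Type*} [MeasureSpace Ω] [IsProbabilityMeasure (ℙ : Measure Ω)]
    (Rc α s : ℝ) (hRc : 0 < Rc) (hα : 0 < α) (hs : 0 ≤ s)
    (X : Ω → ℝ) (Y : Ω → EuclideanSpace ℝ (Fin 2))
    (hXm : Measurable X) (hYm : Measurable Y)
    (hY : Measure.map Y ℙ =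
      (volume (Metric.closedBall (0 : EuclideanSpace ℝ (Fin 2)) Rc))⁻¹ •
        volume.restrict (Metric.closedBall 0 Rc))
    (hX : ∀ t : ℝ, 0 ≤ t → ℙ {ω | t ≤ X ω} = ENNReal.ofReal (Real.exp (-t)))
    (hindep : IndepFun X Y ℙ) :
    ∫ ω, Real.exp (-(s * X ω / ‖Y ω‖ ^ α)) ∂ℙ =
      (2 / Rc ^ 2) * ∫ r in (0 : ℝ)..Rc, r / (1 + s * r ^ (-α)) := by
  have hmapX : Measure.map X ℙ = nuExp := map_eq_nuExp X hXm hX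
  have hprod : Measure.map (fun ω => (X ω, Y ω)) ℙ
      = (Measure.map X ℙ).prod (Measure.map Y ℙ) :=
    (indepFun_iff_map_prod_eq_prod_map_map hXm.aemeasurable hYm.aemeasurable).mp hindep
  set f : ℝ × EuclideanSpace ℝ (Fin 2) → ℝ :=
    fun p => Real.exp (-(s * p.1 / ‖p.2‖ ^ α)) with hf
  have hfm : Measurable f := by
    apply Measurable.exp
    apply Measurable.neg
    have hrc : Continuous fun x : ℝ => x ^ α :=
      continuous_iff_continuousAt.2 fun x => Real.continuousAt_rpow_const x α (Or.inr hα.le)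
    exact (measurable_fst.const_mul s).div
      (hrc.measurable.comp (measurable_norm.comp measurable_snd))
  haveI hPnu : IsProbabilityMeasure nuExp :=
    hmapX ▸ Measure.isProbabilityMeasure_map hXm.aemeasurable
  haveI : IsProbabilityMeasure (Measure.map Y ℙ) := Measure.isProbabilityMeasure_map hYm.aemeasurable
  have h0 : (nuExp.prod (Measure.map Y ℙ)) {p | p.1 ≤ 0} = 0 := by
    have hset : {p : ℝ × EuclideanSpace ℝ (Fin 2) | p.1 ≤ 0} = Iic 0 ×ˢ univ := by
      ext p; simp
    have hIic : nuExp (Iic 0) = 0 := by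
      rw [nuExp, withDensity_apply _ measurableSet_Iic,
        Measure.restrict_restrict measurableSet_Iic]
      have : (Iic (0:ℝ) ∩ Ioi 0) = ∅ := by
        ext x; simp only [mem_inter_iff, mem_Iic, mem_Ioi, mem_empty_iff_false, iff_false,
          not_and, not_lt]
        exact fun h => h
      rw [this, Measure.restrict_empty, lintegral_zero_measure]
    rw [hset, Measure.prod_prod, hIic, zero_mul]
  have hint : Integrable f (nuExp.prod (Measure.map Y ℙ)) := by
    refine Integrable.mono' (integrable_const 1) hfm.aestronglyMeasurable ?_
    refine Filter.eventually_of_mem (U := {p : ℝ × EuclideanSpace ℝ (Fin 2) | p.1 ≤ 0}ᶜ)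
      (mem_ae_iff.2 (by rw [compl_compl]; exact h0)) ?_
    intro p hp
    simp only [mem_compl_iff, mem_setOf_eq, not_le] at hp
    rw [hf, Real.norm_eq_abs, abs_of_pos (Real.exp_pos _)]
    rw [Real.exp_le_one_iff]
    simp only [neg_nonpos]
    exact div_nonneg (mul_nonneg hs hp.le) (Real.rpow_nonneg (norm_nonneg _) _)
  calc ∫ ω, Real.exp (-(s * X ω / ‖Y ω‖ ^ α)) ∂ℙ
      = ∫ p, f p ∂(Measure.map (fun ω => (X ω, Y ω)) ℙ) :=
        (integral_map (hXm.prodMk hYm).aemeasurable hfm.aestronglyMeasurable).symm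
    _ = ∫ y, ∫ x, f (x, y) ∂nuExp ∂(Measure.map Y ℙ) := by
        rw [hprod, hmapX]; exact integral_prod_symm f hint
    _ = ∫ y, (1 + s * ‖y‖ ^ (-α))⁻¹ ∂(Measure.map Y ℙ) := by
        refine integral_congr_ae (Filter.Eventually.of_forall fun y => ?_)
        have hc : 0 ≤ s / ‖y‖ ^ α :=
          div_nonneg hs (Real.rpow_nonneg (norm_nonneg _) _)
        have h := nuExp_laplace hc
        simp_rw [div_mul_eq_mul_div] at h
        rw [hf]
        simp only
        rw [h, Real.rpow_neg (norm_nonneg _), div_eq_mul_inv]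
    _ = (2 / Rc ^ 2) * ∫ r in (0 : ℝ)..Rc, r / (1 + s * r ^ (-α)) := by
        rw [hY, integral_smul_measure,
          radial_integral Rc hRc (fun r => (1 + s * r ^ (-α))⁻¹)]
        have hball := Measure.addHaar_closedBall (μ := (volume : Measure (EuclideanSpace ℝ (Fin 2))))
          0 hRc.le
        rw [finrank_euclideanSpace_fin] at hball
        set A := volume (Metric.ball (0 : EuclideanSpace ℝ (Fin 2)) 1) with hA
        have hA0 : A ≠ 0 := (Metric.measure_ball_pos _ _ one_pos).ne'
        have hAtop : A ≠ ⊤ := measure_ball_lt_top.ne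
        have hI : ∀ r : ℝ, r * (1 + s * r ^ (-α))⁻¹ = r / (1 + s * r ^ (-α)) := fun r =>
          (div_eq_mul_inv _ _).symm
        simp_rw [hI]
        rw [hball, smul_eq_mul, ENNReal.toReal_inv, ENNReal.toReal_mul,
          ENNReal.toReal_ofReal (by positivity)]
        have hA' : 0 < A.toReal := ENNReal.toReal_pos hA0 hAtop
        field_simp
end
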